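/- Let R be a commutative ring and let (q₁,…,qₙ) be a palindromic sequence (q_i = q_{n+1−i} for 1 ≤ i ≤ n) of even length n = 2s. Then [q₁,…,q_s,q_s,…,q₂]² + 1 = [q₁,…,q_s,q_s,…,q₁]·[q₂,…,q_s,q_s,…,q₂] = ([q₁,…,q_s]² + [q₁,…,q_{s−1}]²)·([q₂,…,q_s]² + [q₂,…,q_{s−1}]²). -/

import Mathlib

/-- Auxiliary function: the continuant computed on the *reversed* sequence,
implementing the recurrence `[q₁,…,qₙ] = [q₁,…,q_{n−1}]·qₙ + [q₁,…,q_{n−2}]`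
together with `[] = 1` and `[q₁] = q₁`. -/
def contAux {R : Type*} [Ring R] : List R → R
  | [] => 1
  | [a] => a
  | a :: b :: l => contAux (b :: l) * a + contAux l

/-- The continuant `[q₁,…,qₙ]` of the finite sequence `q₁,…,qₙ`. -/
def continuant {R : Type*} [Ring R] (l : List R) : R :=
  contAux l.reverse

namespace ContPal
open Matrix


variable {R : Type*} [CommRing R]

lemma contAux_cons_cons (a b : R) (l : List R) :
    contAux (a :: b :: l) = contAux (b :: l) * a + contAux l := rfl

def Mc (a : R) : Matrix (Fin 2) (Fin 2) R := !![a, 1; 1, 0]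

def QM (l : List R) : Matrix (Fin 2) (Fin 2) R := (l.map Mc).prod

lemma QM_nil : QM ([] : List R) = 1 := rfl

lemma QM_cons (a : R) (l : List R) : QM (a :: l) = Mc a * QM l := by
  simp [QM]

lemma QM_append (l₁ l₂ : List R) : QM (l₁ ++ l₂) = QM l₁ * QM l₂ := by
  simp [QM, List.prod_append]

lemma QM_single (a : R) : QM [a] = !![a, 1; 1, 0] := by
  simp [QM, Mc]

lemma QM_cons_cons (l : List R) : ∀ a b : R,
    QM (a :: b :: l) =
      !![contAux (a :: b :: l), contAux ((a :: b :: l).dropLast);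
         contAux (b :: l), contAux ((b :: l).dropLast)] := by
  induction l with
  | nil =>
    intro a b
    rw [QM_cons, QM_single, Mc, Matrix.mul_fin_two]
    simp [contAux]
    ring_nf
  | cons c t ih =>
    intro a b
    rw [QM_cons, ih b c, Mc, Matrix.mul_fin_two]
    have h1 : (a :: b :: c :: t).dropLast = a :: b :: (c :: t).dropLast := rfl
    have h2 : (b :: c :: t).dropLast = b :: (c :: t).dropLast := rfl
    rw [h1, h2, contAux_cons_cons a b (c :: t), contAux_cons_cons a b ((c :: t).dropLast)]
    ring_nf

lemma Mc_transpose (a : R) : (Mc a)ᵀ = Mc a := by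
  rw [Mc]
  ext i j
  fin_cases i <;> fin_cases j <;> simp

lemma QM_reverse (l : List R) : QM l.reverse = (QM l)ᵀ := by
  induction l with
  | nil => simp [QM_nil]
  | cons a t ih =>
    rw [List.reverse_cons, QM_append, QM_cons, QM_cons, QM_nil, mul_one,
      Matrix.transpose_mul, ih, Mc_transpose]

lemma QM_00 (l : List R) : QM l 0 0 = contAux l := by
  match l with
  | [] => simp [QM_nil, contAux]
  | [a] => simp [QM_single, contAux]
  | a :: b :: t => rw [QM_cons_cons]; simp

lemma QM_01 (l : List R) (h : l ≠ []) : QM l 0 1 = contAux l.dropLast := by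
  match l with
  | [a] => simp [QM_single, contAux]
  | a :: b :: t => rw [QM_cons_cons]; simp

lemma contAux_reverse (l : List R) : contAux l.reverse = contAux l := by
  rw [← QM_00 l.reverse, ← QM_00 l, QM_reverse]
  rfl

lemma continuant_eq (l : List R) : continuant l = contAux l := contAux_reverse l

lemma QM_det (l : List R) : (QM l).det = (-1) ^ l.length := by
  induction l with
  | nil => simp [QM_nil]
  | cons a t ih =>
    rw [QM_cons, Matrix.det_mul, ih]
    have : (Mc a).det = -1 := by rw [Mc, Matrix.det_fin_two_of]; ring
    rw [this, List.length_cons, pow_succ]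
    ring

lemma contAux_palindrome (u : List R) (hu : u ≠ []) :
    contAux (u ++ u.reverse) = contAux u ^ 2 + contAux u.dropLast ^ 2 := by
  have h := QM_append u u.reverse
  have h00 : QM (u ++ u.reverse) 0 0 = contAux (u ++ u.reverse) := QM_00 _
  rw [h, QM_reverse] at h00
  rw [← h00, Matrix.mul_apply, Fin.sum_univ_two]
  simp only [Matrix.transpose_apply]
  rw [QM_00, QM_01 u hu]
  ring

lemma contAux_det (l : List R) (hl : 2 ≤ l.length) :
    contAux l * contAux l.tail.dropLast - contAux l.dropLast * contAux l.tail
      = (-1) ^ l.length := by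
  match l with
  | a :: b :: t =>
    have hd := QM_det (a :: b :: t)
    rw [QM_cons_cons, Matrix.det_fin_two_of] at hd
    simpa using hd

end ContPal

/-- For a palindromic sequence `(q₁,…,qₙ)` of even length `n = 2s` in a commutative ring,
`[q₁,…,q_s,q_s,…,q₂]² + 1 = [q₁,…,q_s,q_s,…,q₁]·[q₂,…,q_s,q_s,…,q₂]
  = ([q₁,…,q_s]² + [q₁,…,q_{s−1}]²)·([q₂,…,q_s]² + [q₂,…,q_{s−1}]²)`. -/
theorem continuant_palindromic {R : Type*} [CommRing R] (s : ℕ) (hs : 2 ≤ s)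
    (q : Fin (2 * s) → R)
    (hpal : ∀ i : Fin (2 * s), q i = q ⟨2 * s - 1 - (i : ℕ), by have := i.isLt; omega⟩) :
    continuant ((List.ofFn q).dropLast) ^ 2 + 1 =
        continuant (List.ofFn q) * continuant (((List.ofFn q).tail).dropLast) ∧
      continuant (List.ofFn q) * continuant (((List.ofFn q).tail).dropLast) =
        (continuant ((List.ofFn q).take s) ^ 2 +
            continuant ((List.ofFn q).take (s - 1)) ^ 2) *
          (continuant (((List.ofFn q).drop 1).take (s - 1)) ^ 2 +
            continuant (((List.ofFn q).drop 1).take (s - 2)) ^ 2) := by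
  have hlen : (List.ofFn q).length = 2 * s := by simp
  set l := List.ofFn q with hl
  set w := l.take s with hw_def
  have hwlen : w.length = s := by
    rw [hw_def, List.length_take, hlen]; omega
  have hwne : w ≠ [] := by
    intro h; rw [h] at hwlen; simp at hwlen; omega
  have hdrop : l.drop s = w.reverse := by
    apply List.ext_getElem
    · simp [hlen, hwlen]; omega
    · intro i h1 h2
      have hi : i < s := by
        have := h1; rw [List.length_drop, hlen] at this; omega
      simp only [hw_def, hl, List.getElem_drop, List.getElem_reverse,
        List.getElem_take, List.getElem_ofFn, List.length_take, List.length_ofFn]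
      rw [hpal ⟨s + i, by omega⟩]
      congr 1
      ext
      simp
      omega
  have hw : l = w ++ w.reverse := by
    conv_lhs => rw [← List.take_append_drop s l]
    rw [hdrop]
  have hpal_l : l.reverse = l := by
    rw [hw, List.reverse_append, List.reverse_reverse]
  have hwtne : w.tail ≠ [] := by
    intro h
    have := congrArg List.length h
    rw [List.length_tail, hwlen] at this
    simp at this; omega
  -- continuant = contAux
  simp only [ContPal.continuant_eq]
  -- first conjunct pieces
  have hdet := ContPal.contAux_det l (by rw [hlen]; omega)
  rw [hlen, pow_mul, neg_one_sq, one_pow] at hdet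
  have htd : contAux l.tail = contAux l.dropLast := by
    have : l.dropLast = l.tail.reverse := by
      conv_lhs => rw [← hpal_l]
      rw [List.dropLast_reverse]
    rw [this, ContPal.contAux_reverse]
  rw [htd] at hdet
  -- second conjunct pieces
  have hA : contAux l = contAux w ^ 2 + contAux w.dropLast ^ 2 := by
    rw [hw]; exact ContPal.contAux_palindrome w hwne
  have hB : l.tail.dropLast = w.tail ++ w.tail.reverse := by
    rw [hw, List.tail_append_of_ne_nil hwne,
      List.dropLast_append_of_ne_nil (show w.reverse ≠ [] by simpa using hwne), List.dropLast_reverse]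
  have hC : contAux (l.tail.dropLast) = contAux w.tail ^ 2 + contAux w.tail.dropLast ^ 2 := by
    rw [hB]; exact ContPal.contAux_palindrome w.tail hwtne
  have e1 : l.take (s - 1) = w.dropLast := by
    rw [List.dropLast_eq_take, hwlen, hw_def, List.take_take]
    congr 1; omega
  have e2 : (l.drop 1).take (s - 1) = w.tail := by
    rw [hw_def, ← List.drop_one, List.drop_take]
  have e3 : (l.drop 1).take (s - 2) = w.tail.dropLast := by
    rw [List.dropLast_eq_take, List.length_tail, hwlen, ← e2, List.take_take]
    congr 1; omega
  rw [e1, e2, e3]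
  constructor
  · linear_combination -hdet
  · rw [hA, hC]
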